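/- Let G₁, G₂, … be a sequence of rooted trees on [n] with self-loops added (each G_i is a directed tree in which some root reaches every node, plus all self-loops). If the product graph G(t) = G₁ ∘ ⋯ ∘ G_t has no node with out-edges to all nodes, then G(t+1) contains strictly more edges than G(t). Consequently, the broadcast time of any such sequence is at most n². -/
import Mathlib


namespace Broadcast

/-- Directed graphs on `[n]` as binary relations on `Fin n`. -/
abbrev DGraph (n : ℕ) := Fin n → Fin n → Prop

/-- The product graph: `(x,y)` is an edge iff there is `z` with `(x,z) ∈ A` and `(z,y) ∈ B`. -/
def gcomp {n : ℕ} (A B : DGraph n) : DGraph n := fun x y => ∃ z, A x z ∧ B z y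


/-- `prodUpTo G t` is the product graph `G(t) = G₁ ∘ ⋯ ∘ G_t` (with `G(0)` the identity
relation, i.e. the empty product). -/
def prodUpTo {n : ℕ} (G : ℕ → DGraph n) : ℕ → DGraph n
  | 0 => Eq
  | t + 1 => gcomp (prodUpTo G t) (G (t + 1))

/-- `G` is a rooted tree on `[n]` with self-loops: self-loops at all nodes, every non-root
node `y` has the edge from its parent `p y`, every edge is a self-loop or a parent edge,
and the root `r` has a directed path to every node. -/
structure IsRootedTree {n : ℕ} (G : DGraph n) (r : Fin n) (p : Fin n → Fin n) : Prop where
  loops : ∀ x, G x x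
  parent_edge : ∀ y, y ≠ r → G (p y) y
  parent_ne : ∀ y, y ≠ r → p y ≠ y
  edges : ∀ x y, G x y → x = y ∨ (y ≠ r ∧ x = p y)
  reach : ∀ y, Relation.ReflTransGen G r y

/-- For a sequence of rooted trees with self-loops: if the product `G(t)` has no node with
out-edges to all nodes, then `G(t+1)` has strictly more edges than `G(t)`. Consequently,
the broadcast time of any such sequence is at most `n²`. -/
theorem edge_increase_and_quadratic_bound {n : ℕ} (G : ℕ → DGraph n)
    (htree : ∀ i, 1 ≤ i → ∃ r p, IsRootedTree (G i) r p) :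
    (∀ t, (¬ ∃ x : Fin n, ∀ y, prodUpTo G t x y) →
      {e : Fin n × Fin n | prodUpTo G t e.1 e.2}.ncard <
        {e : Fin n × Fin n | prodUpTo G (t + 1) e.1 e.2}.ncard) ∧
    (∃ t, t ≤ n ^ 2 ∧ ∃ x : Fin n, ∀ y, prodUpTo G t x y) := by
  have hrefl : ∀ t x, prodUpTo G t x x := by
    intro t
    induction t with
    | zero => intro x; rfl
    | succ t ih =>
      intro x
      obtain ⟨r, p, ht⟩ := htree (t + 1) (by omega)
      exact ⟨x, ih x, ht.loops x⟩
  have part1 : ∀ t, (¬ ∃ x : Fin n, ∀ y, prodUpTo G t x y) →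
      {e : Fin n × Fin n | prodUpTo G t e.1 e.2}.ncard <
        {e : Fin n × Fin n | prodUpTo G (t + 1) e.1 e.2}.ncard := by
    intro t hno
    obtain ⟨r, p, ht⟩ := htree (t + 1) (by omega)
    have hsub : {e : Fin n × Fin n | prodUpTo G t e.1 e.2} ⊆
        {e : Fin n × Fin n | prodUpTo G (t + 1) e.1 e.2} := by
      rintro ⟨x, y⟩ hxy
      exact ⟨y, hxy, ht.loops y⟩
    have hne : {e : Fin n × Fin n | prodUpTo G t e.1 e.2} ≠
        {e : Fin n × Fin n | prodUpTo G (t + 1) e.1 e.2} := by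
      intro heq
      apply hno
      refine ⟨r, fun y => ?_⟩
      induction ht.reach y with
      | refl => exact hrefl t r
      | @tail b c hab hbc ih =>
        have h1 : (r, c) ∈ {e : Fin n × Fin n | prodUpTo G (t + 1) e.1 e.2} := ⟨b, ih, hbc⟩
        have h2 : (r, c) ∈ {e : Fin n × Fin n | prodUpTo G t e.1 e.2} := by
          rw [heq]; exact h1
        exact h2
    exact Set.ncard_lt_ncard (hsub.ssubset_of_ne hne) (Set.toFinite _)
  refine ⟨part1, ?_⟩
  by_contra hno2
  rcases Nat.eq_zero_or_pos n with h0 | hn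
  · obtain ⟨r, _, _⟩ := htree 1 le_rfl
    exact absurd r.2 (by omega)
  · have hmono : ∀ k, k ≤ n ^ 2 →
        {e : Fin n × Fin n | prodUpTo G 0 e.1 e.2}.ncard + k ≤
          {e : Fin n × Fin n | prodUpTo G k e.1 e.2}.ncard := by
      intro k
      induction k with
      | zero => simp
      | succ k ih =>
        intro hk
        have h1 := ih (by omega)
        have h2 := part1 k (fun hex => hno2 ⟨k, by omega, hex⟩)
        omega
    have hpos : 0 < {e : Fin n × Fin n | prodUpTo G 0 e.1 e.2}.ncard :=
      (Set.ncard_pos (Set.toFinite _)).mpr ⟨(⟨0, hn⟩, ⟨0, hn⟩), rfl⟩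
    have hle : {e : Fin n × Fin n | prodUpTo G (n ^ 2) e.1 e.2}.ncard ≤ n ^ 2 := by
      have h := Set.ncard_le_ncard (Set.subset_univ
        {e : Fin n × Fin n | prodUpTo G (n ^ 2) e.1 e.2}) Set.finite_univ
      simpa [Set.ncard_univ, Nat.card_eq_fintype_card, sq] using h
    have := hmono (n ^ 2) le_rfl
    omega


end Broadcast
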